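/- Let n ≥ 2 and let A, B be centrally symmetric convex bodies in ℝⁿ. If for every convex body K in ℝⁿ and every (n−1)-dimensional linear subspace E of ℝⁿ one has vol_{n-1}(E ∩ (A + K)) ≤ vol_{n-1}(E ∩ (B + K)), then A ⊆ B. -/

import Mathlib

set_option maxHeartbeats 1000000
open MeasureTheory Pointwise Module RealInnerProductSpace Filter

noncomputable def onbOfCard {ι F : Type*} [Fintype ι] [Nonempty ι] [NormedAddCommGroup F]
    [InnerProductSpace ℝ F] [FiniteDimensional ℝ F] (v : ι → F) (hv : Orthonormal ℝ v)
    (hc : Fintype.card ι = finrank ℝ F) : OrthonormalBasis ι ℝ F :=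
  (basisOfLinearIndependentOfCardEqFinrank hv.linearIndependent hc).toOrthonormalBasis
    (by rwa [coe_basisOfLinearIndependentOfCardEqFinrank])

theorem coe_onbOfCard {ι F : Type*} [Fintype ι] [Nonempty ι] [NormedAddCommGroup F]
    [InnerProductSpace ℝ F] [FiniteDimensional ℝ F] (v : ι → F) (hv : Orthonormal ℝ v)
    (hc : Fintype.card ι = finrank ℝ F) : ⇑(onbOfCard v hv hc) = v := by
  rw [onbOfCard, Basis.coe_toOrthonormalBasis, coe_basisOfLinearIndependentOfCardEqFinrank]

theorem volume_box {ι F : Type*} [Fintype ι] [NormedAddCommGroup F] [InnerProductSpace ℝ F]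
    [FiniteDimensional ℝ F] [MeasurableSpace F] [BorelSpace F]
    (b : OrthonormalBasis ι ℝ F) (r : ι → ℝ) :
    volume {x : F | ∀ i, |⟪b i, x⟫| ≤ r i} = ∏ i, ENNReal.ofReal (2 * r i) := by
  have h1 : {x : F | ∀ i, |⟪b i, x⟫| ≤ r i}
      = b.repr ⁻¹' ((MeasurableEquiv.toLp 2 (ι → ℝ)).symm ⁻¹'
        (Set.univ.pi fun i => Set.Icc (-(r i)) (r i))) := by
    ext x
    simp only [Set.mem_setOf_eq, Set.mem_preimage, Set.mem_univ_pi, Set.mem_Icc]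
    constructor
    · intro h i
      have hh := h i
      rw [← b.repr_apply_apply] at hh
      have hh' := abs_le.mp hh
      exact ⟨hh'.1, hh'.2⟩
    · intro h i
      rw [← b.repr_apply_apply]
      exact abs_le.mpr ⟨(h i).1, (h i).2⟩
  rw [h1]
  rw [b.measurePreserving_repr.measure_preimage]
  · rw [(EuclideanSpace.volume_preserving_symm_measurableEquiv_toLp ι).measure_preimage]
    · rw [volume_pi_pi]
      simp only [Real.volume_Icc]
      congr 1
      ext i
      congr 1
      ring
    · exact (MeasurableSet.univ_pi fun i => measurableSet_Icc).nullMeasurableSet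
  · exact ((MeasurableSet.univ_pi fun i => measurableSet_Icc).preimage
      (MeasurableEquiv.toLp 2 (ι → ℝ)).symm.measurable).nullMeasurableSet

lemma aux_smul_mem {H : Type*} [AddCommGroup H] [Module ℝ H] {A : Set H}
    (hA : Convex ℝ A) {a : H} (ha : a ∈ A) (hna : -a ∈ A) {t : ℝ} (ht : |t| ≤ 1) :
    t • a ∈ A := by
  obtain ⟨h1, h2⟩ := abs_le.mp ht
  have hmem := hA hna ha (a := (1 - t)/2) (b := (1 + t)/2) (by linarith) (by linarith) (by ring)
  have e : ((1 - t)/2) • (-a) + ((1 + t)/2) • a = t • a := by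
    rw [smul_neg, ← sub_eq_neg_add, ← sub_smul]; congr 1; ring
  rwa [e] at hmem

lemma aux_clamp (u α : ℝ) (hα : 0 < α) (hu : |u| ≤ α + 1) :
    ∃ t : ℝ, |t| ≤ 1 ∧ |u - t * α| ≤ 1 := by
  obtain ⟨hu1, hu2⟩ := abs_le.mp hu
  rcases le_total u α with h1 | h1
  · rcases le_total (-α) u with h2 | h2
    · refine ⟨u / α, ?_, ?_⟩
      · rw [abs_div, abs_of_pos hα, div_le_one hα]
        exact abs_le.mpr ⟨h2, h1⟩
      · rw [div_mul_cancel₀ _ hα.ne', sub_self, abs_zero]; exact zero_le_one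
    · exact ⟨-1, by norm_num, abs_le.mpr ⟨by linarith, by linarith⟩⟩
  · exact ⟨1, by norm_num, abs_le.mpr ⟨by linarith, by linarith⟩⟩

lemma aux_exists_R (q ρ : ℝ) (hq : q < 1) (hρ : 0 < ρ) (m : ℕ) :
    ∃ R : ℝ, ρ + 1 ≤ R ∧ q * (R + ρ) ^ m < (R - ρ) ^ m := by
  have hbase : Tendsto (fun R : ℝ => (R - ρ) / (R + ρ)) atTop (nhds 1) := by
    have h0 : Tendsto (fun R : ℝ => 1 - 2 * ρ / (R + ρ)) atTop (nhds 1) := by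
      have hd : Tendsto (fun R : ℝ => 2 * ρ / (R + ρ)) atTop (nhds 0) :=
        Tendsto.div_atTop tendsto_const_nhds (tendsto_atTop_add_const_right _ ρ tendsto_id)
      simpa using tendsto_const_nhds.sub hd
    refine h0.congr' ?_
    filter_upwards [eventually_gt_atTop ρ] with R hR
    have hpos : R + ρ > 0 := by linarith
    field_simp
    ring
  have hpow : Tendsto (fun R : ℝ => ((R - ρ) / (R + ρ)) ^ m) atTop (nhds 1) := by
    simpa using hbase.pow m
  have hev : ∀ᶠ R : ℝ in atTop, q < ((R - ρ) / (R + ρ)) ^ m :=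
    hpow.eventually (eventually_gt_nhds hq)
  obtain ⟨R, hR1, hR2⟩ := (hev.and (eventually_ge_atTop (ρ + 1))).exists
  refine ⟨R, hR2, ?_⟩
  have hpos : (0 : ℝ) < R + ρ := by linarith
  have hpos' : (0 : ℝ) < (R + ρ) ^ m := pow_pos hpos m
  rw [div_pow, lt_div_iff₀ hpos'] at hR1
  linarith

/-- **Corollary (symmetric bodies: hyperplane sections of Minkowski sums).**
If `A`, `B` are centrally symmetric convex bodies in `ℝⁿ`, `n ≥ 2`, and for every
convex body `K` and every `(n-1)`-dimensional linear subspace `E` the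
`(n-1)`-dimensional volume of `E ∩ (A + K)` is at most that of `E ∩ (B + K)`,
then `A ⊆ B`. -/
theorem subset_of_section_sums_symmetric (n : ℕ) (hn : 2 ≤ n)
    (A B : Set (EuclideanSpace ℝ (Fin n)))
    (hA₁ : IsCompact A) (hA₂ : Convex ℝ A) (hA₃ : (interior A).Nonempty)
    (hB₁ : IsCompact B) (hB₂ : Convex ℝ B) (hB₃ : (interior B).Nonempty)
    (hAsymm : A = -A) (hBsymm : B = -B)
    (h : ∀ K : Set (EuclideanSpace ℝ (Fin n)),
        IsCompact K → Convex ℝ K → (interior K).Nonempty →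
        ∀ E : Submodule ℝ (EuclideanSpace ℝ (Fin n)), Module.finrank ℝ E = n - 1 →
        volume ((↑) ⁻¹' (A + K) : Set E) ≤ volume ((↑) ⁻¹' (B + K) : Set E)) :
    A ⊆ B := by
  intro a ha
  by_contra hnB
  have hnegA : ∀ x ∈ A, -x ∈ A := by
    intro x hx; rw [hAsymm]; exact Set.neg_mem_neg.mpr hx
  have hnegB : ∀ x ∈ B, -x ∈ B := by
    intro x hx; rw [hBsymm]; exact Set.neg_mem_neg.mpr hx
  -- bound on A and B
  obtain ⟨ρ₀, hρ₀⟩ := ((hA₁.union hB₁).isBounded).subset_closedBall 0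
  set ρ : ℝ := max ρ₀ 1 with hρdef
  have hρ1 : (1 : ℝ) ≤ ρ := le_max_right _ _
  have hρpos : (0 : ℝ) < ρ := lt_of_lt_of_le one_pos hρ1
  have hρA : ∀ x ∈ A, ‖x‖ ≤ ρ := by
    intro x hx
    have := hρ₀ (Set.mem_union_left _ hx)
    rw [Metric.mem_closedBall, dist_zero_right] at this
    exact this.trans (le_max_left _ _)
  have hρB : ∀ x ∈ B, ‖x‖ ≤ ρ := by
    intro x hx
    have := hρ₀ (Set.mem_union_right _ hx)
    rw [Metric.mem_closedBall, dist_zero_right] at this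
    exact this.trans (le_max_left _ _)
  -- separation
  obtain ⟨f, u, hfB, hfa⟩ := geometric_hahn_banach_closed_point hB₂ hB₁.isClosed hnB
  have h0B : (0 : EuclideanSpace ℝ (Fin n)) ∈ B := by
    obtain ⟨b₀, hb₀⟩ := hB₃
    have hb₀' := interior_subset hb₀
    have := aux_smul_mem hB₂ hb₀' (hnegB _ hb₀') (t := 0) (by norm_num)
    simpa using this
  have hupos : 0 < u := by simpa using hfB 0 h0B
  set w₀ : EuclideanSpace ℝ (Fin n) := (InnerProductSpace.toDual ℝ _).symm f with hw₀def
  have hw₀ : ∀ x, ⟪w₀, x⟫ = f x := fun x => InnerProductSpace.toDual_symm_apply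
  have hw₀ne : w₀ ≠ 0 := by
    intro hc
    have := hw₀ a
    rw [hc, inner_zero_left] at this
    have : f a = 0 := this.symm
    linarith [hfa]
  have hnw₀pos : 0 < ‖w₀‖⁻¹ := inv_pos.mpr (norm_pos_iff.mpr hw₀ne)
  set w : EuclideanSpace ℝ (Fin n) := ‖w₀‖⁻¹ • w₀ with hwdef
  have hw : ‖w‖ = 1 := by
    rw [hwdef, norm_smul, norm_inv, norm_norm, inv_mul_cancel₀ (norm_ne_zero_iff.mpr hw₀ne)]
  set β : ℝ := ‖w₀‖⁻¹ * u with hβdef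
  set α : ℝ := ⟪w, a⟫ with hαdef
  have hwinner : ∀ x, ⟪w, x⟫ = ‖w₀‖⁻¹ * f x := by
    intro x; rw [hwdef, real_inner_smul_left, hw₀]
  have hβpos : 0 < β := mul_pos hnw₀pos hupos
  have hβα : β < α := by
    rw [hαdef, hwinner, hβdef]
    exact (mul_lt_mul_iff_right₀ hnw₀pos).mpr hfa
  have hαpos : 0 < α := hβpos.trans hβα
  have hBw : ∀ b ∈ B, |⟪w, b⟫| ≤ β := by
    intro b hb
    rw [abs_le]
    constructor
    · have := hfB (-b) (hnegB _ hb)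
      rw [← hw₀ (-b), inner_neg_right] at this
      have h2 : -(‖w₀‖⁻¹ * ⟪w₀, b⟫) ≤ ‖w₀‖⁻¹ * u := by
        rw [← mul_neg]
        exact le_of_lt ((mul_lt_mul_iff_right₀ hnw₀pos).mpr this)
      rw [hwinner, ← hw₀]
      rw [hβdef]
      linarith
    · rw [hwinner, hβdef]
      exact le_of_lt ((mul_lt_mul_iff_right₀ hnw₀pos).mpr (hfB b hb))
  -- orthogonal vector v and subspace E
  have hH : finrank ℝ (EuclideanSpace ℝ (Fin n)) = n := finrank_euclideanSpace_fin
  have fact1 : Fact (finrank ℝ (EuclideanSpace ℝ (Fin n)) = (n - 1) + 1) := ⟨by omega⟩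
  have hwne : w ≠ 0 := by intro hc; rw [hc, norm_zero] at hw; norm_num at hw
  obtain ⟨v', hv'mem, hv'ne⟩ : ∃ v' ∈ (ℝ ∙ w)ᗮ, v' ≠ 0 := by
    have hWperp : finrank ℝ ((ℝ ∙ w)ᗮ : Submodule ℝ (EuclideanSpace ℝ (Fin n))) = n - 1 :=
      Submodule.finrank_orthogonal_span_singleton hwne
    have hpos : 0 < finrank ℝ ((ℝ ∙ w)ᗮ : Submodule ℝ (EuclideanSpace ℝ (Fin n))) := by omega
    obtain ⟨x, hx⟩ := Module.finrank_pos_iff_exists_ne_zero.mp hpos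
    exact ⟨↑x, x.2, fun hc => hx (Subtype.coe_injective hc)⟩
  set v : EuclideanSpace ℝ (Fin n) := ‖v'‖⁻¹ • v' with hvdef
  have hvmem : v ∈ (ℝ ∙ w)ᗮ := Submodule.smul_mem _ _ hv'mem
  have hvnorm : ‖v‖ = 1 := by
    rw [hvdef, norm_smul, norm_inv, norm_norm, inv_mul_cancel₀ (norm_ne_zero_iff.mpr hv'ne)]
  have hvw : ⟪v, w⟫ = 0 := by
    have := (Submodule.mem_orthogonal _ v).mp hvmem w (Submodule.mem_span_singleton_self w)
    rwa [real_inner_comm] at this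
  have hwv : ⟪w, v⟫ = 0 := by rwa [real_inner_comm] at hvw
  set E : Submodule ℝ (EuclideanSpace ℝ (Fin n)) := (ℝ ∙ v)ᗮ with hEdef
  have hvne : v ≠ 0 := by intro hc; rw [hc, norm_zero] at hvnorm; norm_num at hvnorm
  have hE : finrank ℝ E = n - 1 := Submodule.finrank_orthogonal_span_singleton hvne
  have hwE : w ∈ E := by
    rw [hEdef, Submodule.mem_orthogonal_singleton_iff_inner_right]; exact hvw
  set wE : E := ⟨w, hwE⟩ with hwEdef
  have hwEnorm : ‖wE‖ = 1 := hw
  have fact2 : Fact (finrank ℝ E = (n - 2) + 1) := ⟨by omega⟩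
  have hwEne : wE ≠ 0 := by
    intro hc; apply hwne; simpa [hwEdef] using congrArg (Subtype.val) hc
  set F : Submodule ℝ E := (ℝ ∙ wE)ᗮ with hFdef
  have hF : finrank ℝ F = n - 2 := Submodule.finrank_orthogonal_span_singleton hwEne
  set c : OrthonormalBasis (Fin (n - 2)) ℝ F :=
    (stdOrthonormalBasis ℝ F).reindex (finCongr hF) with hcdef
  have hcE : ∀ i, ((c i : E) : EuclideanSpace ℝ (Fin n)) ∈ E := fun i => ((c i : E)).2
  have hcw : ∀ i, ⟪w, ((c i : E) : EuclideanSpace ℝ (Fin n))⟫ = 0 := by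
    intro i
    have h1 : ⟪wE, (c i : E)⟫ = 0 :=
      Submodule.mem_orthogonal_singleton_iff_inner_right.mp (c i).2
    rwa [Submodule.coe_inner] at h1
  have hcv : ∀ i, ⟪v, ((c i : E) : EuclideanSpace ℝ (Fin n))⟫ = 0 := fun i =>
    Submodule.mem_orthogonal_singleton_iff_inner_right.mp (hcE i)
  have hcc : ∀ i j, ⟪((c i : E) : EuclideanSpace ℝ (Fin n)),
      ((c j : E) : EuclideanSpace ℝ (Fin n))⟫ = if i = j then 1 else 0 := by
    intro i j
    have h1 := (orthonormal_iff_ite.mp c.orthonormal) i j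
    rw [Submodule.coe_inner, Submodule.coe_inner] at h1
    exact h1
  have hcnorm : ∀ i, ‖((c i : E) : EuclideanSpace ℝ (Fin n))‖ = 1 := by
    intro i
    have h1 := c.orthonormal.1 i
    exact h1
  -- ambient orthonormal basis
  set gf : Unit ⊕ Unit ⊕ Fin (n - 2) → EuclideanSpace ℝ (Fin n) :=
    Sum.elim (fun _ => w) (Sum.elim (fun _ => v) (fun i => ((c i : E) : EuclideanSpace ℝ (Fin n))))
    with hgfdef
  have hgforth : Orthonormal ℝ gf := by
    rw [orthonormal_iff_ite]
    rintro (i | i | i) (j | j | j) <;>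
      simp only [hgfdef, Sum.elim_inl, Sum.elim_inr, reduceCtorEq, if_false, Sum.inr.injEq,
        Sum.inl.injEq, if_true]
    · rw [real_inner_self_eq_norm_mul_norm, hw]; norm_num
    · exact hwv
    · exact hcw j
    · exact hvw
    · rw [real_inner_self_eq_norm_mul_norm, hvnorm]; norm_num
    · exact hcv j
    · rw [real_inner_comm]; exact hcw i
    · rw [real_inner_comm]; exact hcv i
    · rw [hcc i j]
  have hcard : Fintype.card (Unit ⊕ Unit ⊕ Fin (n - 2)) = finrank ℝ (EuclideanSpace ℝ (Fin n)) := by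
    simp [hH]; omega
  set gB : OrthonormalBasis (Unit ⊕ Unit ⊕ Fin (n - 2)) ℝ (EuclideanSpace ℝ (Fin n)) :=
    onbOfCard gf hgforth hcard with hgBdef
  have hgB : ⇑gB = gf := coe_onbOfCard _ _ _
  -- orthonormal basis of E
  set ef : Unit ⊕ Fin (n - 2) → E := Sum.elim (fun _ => wE) (fun i => (c i : E)) with hefdef
  have heforth : Orthonormal ℝ ef := by
    rw [orthonormal_iff_ite]
    rintro (i | i) (j | j) <;>
      simp only [hefdef, Sum.elim_inl, Sum.elim_inr, reduceCtorEq, if_false, Sum.inr.injEq,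
        Sum.inl.injEq, if_true]
    · rw [real_inner_self_eq_norm_mul_norm, hwEnorm]; norm_num
    · rw [Submodule.coe_inner]; exact hcw j
    · rw [Submodule.coe_inner, real_inner_comm]; exact hcw i
    · rw [Submodule.coe_inner, hcc i j]
  have hcardE : Fintype.card (Unit ⊕ Fin (n - 2)) = finrank ℝ E := by
    simp [hE]; omega
  set EB : OrthonormalBasis (Unit ⊕ Fin (n - 2)) ℝ E := onbOfCard ef heforth hcardE with hEBdef
  have hEB : ⇑EB = ef := coe_onbOfCard _ _ _
  -- choose R
  obtain ⟨R, hRρ, hRmain⟩ := aux_exists_R ((β + 1) / (α + 1)) ρ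
    ((div_lt_one (by linarith)).mpr (by linarith)) hρpos (n - 2)
  -- the body K
  set rK : Unit ⊕ Unit ⊕ Fin (n - 2) → ℝ :=
    Sum.elim (fun _ => 1) (Sum.elim (fun _ => ρ) (fun _ => R)) with hrKdef
  have hrK1 : ∀ i, 1 ≤ rK i := by
    rintro (i | i | i) <;> simp [hrKdef] <;> linarith
  set K : Set (EuclideanSpace ℝ (Fin n)) := {y | ∀ i, |⟪gf i, y⟫| ≤ rK i} with hKdef
  have hKconv : Convex ℝ K := by
    intro x hx y hy s t hs ht hst
    intro i
    rw [inner_add_right, real_inner_smul_right, real_inner_smul_right]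
    calc |s * ⟪gf i, x⟫ + t * ⟪gf i, y⟫| ≤ |s * ⟪gf i, x⟫| + |t * ⟪gf i, y⟫| := abs_add_le _ _
      _ = s * |⟪gf i, x⟫| + t * |⟪gf i, y⟫| := by
          rw [abs_mul, abs_mul, abs_of_nonneg hs, abs_of_nonneg ht]
      _ ≤ s * rK i + t * rK i := by
          gcongr
          · exact hx i
          · exact hy i
      _ = rK i := by rw [← add_mul, hst, one_mul]
  have hKclosed : IsClosed K := by
    have : K = ⋂ i, {y : EuclideanSpace ℝ (Fin n) | |⟪gf i, y⟫| ≤ rK i} := by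
      ext y; simp [hKdef]
    rw [this]
    refine isClosed_iInter fun i => ?_
    exact isClosed_le ((continuous_const.inner continuous_id).abs) continuous_const
  have hgfnorm : ∀ i, ‖gf i‖ = 1 := hgforth.1
  have hKcomp : IsCompact K := by
    refine (isCompact_closedBall (0 : EuclideanSpace ℝ (Fin n))
      (Real.sqrt (∑ i, rK i ^ 2))).of_isClosed_subset hKclosed ?_
    intro y hy
    rw [Metric.mem_closedBall, dist_zero_right]
    have h1 : ‖y‖ = ‖gB.repr y‖ := (gB.repr.norm_map y).symm
    rw [h1, EuclideanSpace.norm_eq]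
    apply Real.sqrt_le_sqrt
    apply Finset.sum_le_sum
    intro i _
    have h2 : gB.repr y i = ⟪gf i, y⟫ := by rw [← hgB, gB.repr_apply_apply]
    rw [Real.norm_eq_abs, h2]
    have h3 := hy i
    have h4 : (0:ℝ) ≤ |⟪gf i, y⟫| := abs_nonneg _
    nlinarith [h3, h4]
  have hKint : (interior K).Nonempty := by
    have hsub : Metric.ball (0 : EuclideanSpace ℝ (Fin n)) 1 ⊆ K := by
      intro y hy
      rw [Metric.mem_ball, dist_zero_right] at hy
      intro i
      calc |⟪gf i, y⟫| ≤ ‖gf i‖ * ‖y‖ := abs_real_inner_le_norm _ _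
        _ = ‖y‖ := by rw [hgfnorm i, one_mul]
        _ ≤ rK i := le_trans (le_of_lt hy) (hrK1 i)
    exact ⟨0, interior_maximal hsub Metric.isOpen_ball (Metric.mem_ball_self one_pos)⟩
  -- inclusions
  have hvx : ∀ x : E, ⟪v, (x : EuclideanSpace ℝ (Fin n))⟫ = 0 := fun x =>
    Submodule.mem_orthogonal_singleton_iff_inner_right.mp x.2
  set rlow : Unit ⊕ Fin (n - 2) → ℝ := Sum.elim (fun _ => α + 1) (fun _ => R - ρ) with hrlowdef
  set rup : Unit ⊕ Fin (n - 2) → ℝ := Sum.elim (fun _ => β + 1) (fun _ => R + ρ) with hrupdef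
  have hEBinner : ∀ (x : E) (i), ⟪EB i, x⟫ =
      ⟪(ef i : EuclideanSpace ℝ (Fin n)), (x : EuclideanSpace ℝ (Fin n))⟫ := by
    intro x i
    rw [hEB, Submodule.coe_inner]
  have hlow : {x : E | ∀ i, |⟪EB i, x⟫| ≤ rlow i} ⊆ ((↑) ⁻¹' (A + K) : Set E) := by
    intro x hx
    have hx0 := hx (Sum.inl ())
    rw [hEBinner] at hx0
    simp only [hefdef, Sum.elim_inl, hrlowdef] at hx0
    have hx0' : |⟪w, (x : EuclideanSpace ℝ (Fin n))⟫| ≤ α + 1 := hx0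
    obtain ⟨t, ht1, ht2⟩ := aux_clamp _ α hαpos hx0'
    have haA : t • a ∈ A := aux_smul_mem hA₂ ha (hnegA a ha) ht1
    have hkK : (x : EuclideanSpace ℝ (Fin n)) - t • a ∈ K := by
      rintro (i | i | i) <;>
        simp only [hgfdef, Sum.elim_inl, Sum.elim_inr, hrKdef, inner_sub_right,
          real_inner_smul_right]
      · rw [← hαdef]
        exact ht2
      · rw [hvx x]
        have : |⟪v, a⟫| ≤ ρ := le_trans (abs_real_inner_le_norm _ _)
          (by rw [hvnorm, one_mul]; exact hρA a ha)
        calc |0 - t * ⟪v, a⟫| = |t| * |⟪v, a⟫| := by rw [zero_sub, abs_neg, abs_mul]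
          _ ≤ 1 * ρ := mul_le_mul ht1 this (abs_nonneg _) zero_le_one
          _ = ρ := one_mul ρ
      · have hxi := hx (Sum.inr i)
        rw [hEBinner] at hxi
        simp only [hefdef, Sum.elim_inr, hrlowdef] at hxi
        have hca : |⟪((c i : E) : EuclideanSpace ℝ (Fin n)), a⟫| ≤ ρ :=
          le_trans (abs_real_inner_le_norm _ _) (by rw [hcnorm i, one_mul]; exact hρA a ha)
        calc |⟪((c i : E) : EuclideanSpace ℝ (Fin n)), (x : EuclideanSpace ℝ (Fin n))⟫
              - t * ⟪((c i : E) : EuclideanSpace ℝ (Fin n)), a⟫|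
            ≤ |⟪((c i : E) : EuclideanSpace ℝ (Fin n)), (x : EuclideanSpace ℝ (Fin n))⟫|
              + |t * ⟪((c i : E) : EuclideanSpace ℝ (Fin n)), a⟫| := abs_sub _ _
          _ ≤ (R - ρ) + 1 * ρ := by
              refine add_le_add hxi ?_
              rw [abs_mul]
              exact mul_le_mul ht1 hca (abs_nonneg _) zero_le_one
          _ = R := by ring
    refine Set.mem_preimage.mpr ?_
    rw [Set.mem_add]
    exact ⟨t • a, haA, (x : EuclideanSpace ℝ (Fin n)) - t • a, hkK, by abel⟩
  have hup : ((↑) ⁻¹' (B + K) : Set E) ⊆ {x : E | ∀ i, |⟪EB i, x⟫| ≤ rup i} := by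
    intro x hx
    rw [Set.mem_preimage, Set.mem_add] at hx
    obtain ⟨b, hb, k, hk, hbk⟩ := hx
    intro i
    rw [hEBinner, ← hbk]
    cases i with
    | inl i =>
      simp only [hefdef, Sum.elim_inl, hrupdef, hwEdef]
      rw [inner_add_right]
      have h1 : |⟪w, b⟫| ≤ β := hBw b hb
      have h2 : |⟪w, k⟫| ≤ 1 := hk (Sum.inl ())
      calc |⟪w, b⟫ + ⟪w, k⟫| ≤ |⟪w, b⟫| + |⟪w, k⟫| := abs_add_le _ _
        _ ≤ β + 1 := add_le_add h1 h2
    | inr i =>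
      simp only [hefdef, Sum.elim_inr, hrupdef]
      rw [inner_add_right]
      have h1 : |⟪((c i : E) : EuclideanSpace ℝ (Fin n)), b⟫| ≤ ρ :=
        le_trans (abs_real_inner_le_norm _ _) (by rw [hcnorm i, one_mul]; exact hρB b hb)
      have h2 : |⟪((c i : E) : EuclideanSpace ℝ (Fin n)), k⟫| ≤ R := hk (Sum.inr (Sum.inr i))
      calc |⟪((c i : E) : EuclideanSpace ℝ (Fin n)), b⟫
            + ⟪((c i : E) : EuclideanSpace ℝ (Fin n)), k⟫|
          ≤ |⟪((c i : E) : EuclideanSpace ℝ (Fin n)), b⟫|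
            + |⟪((c i : E) : EuclideanSpace ℝ (Fin n)), k⟫| := abs_add_le _ _
        _ ≤ ρ + R := add_le_add h1 h2
        _ = R + ρ := by ring
  -- volume chain
  have hmain := h K hKcomp hKconv hKint E hE
  have hvlow : volume {x : E | ∀ i, |⟪EB i, x⟫| ≤ rlow i}
      = ENNReal.ofReal (2 * (α + 1)) * ENNReal.ofReal (2 * (R - ρ)) ^ (n - 2) := by
    rw [volume_box EB rlow]
    rw [Fintype.prod_sum_type]
    simp [hrlowdef]
  have hvup : volume {x : E | ∀ i, |⟪EB i, x⟫| ≤ rup i}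
      = ENNReal.ofReal (2 * (β + 1)) * ENNReal.ofReal (2 * (R + ρ)) ^ (n - 2) := by
    rw [volume_box EB rup]
    rw [Fintype.prod_sum_type]
    simp [hrupdef]
  have hchain : ENNReal.ofReal (2 * (α + 1)) * ENNReal.ofReal (2 * (R - ρ)) ^ (n - 2)
      ≤ ENNReal.ofReal (2 * (β + 1)) * ENNReal.ofReal (2 * (R + ρ)) ^ (n - 2) := by
    rw [← hvlow, ← hvup]
    calc volume {x : E | ∀ i, |⟪EB i, x⟫| ≤ rlow i}
        ≤ volume ((↑) ⁻¹' (A + K) : Set E) := measure_mono hlow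
      _ ≤ volume ((↑) ⁻¹' (B + K) : Set E) := hmain
      _ ≤ volume {x : E | ∀ i, |⟪EB i, x⟫| ≤ rup i} := measure_mono hup
  -- derive the real inequality
  have hRρ' : (0:ℝ) ≤ R - ρ := by linarith
  have hreal : 2 * (α + 1) * (2 * (R - ρ)) ^ (n - 2)
      ≤ 2 * (β + 1) * (2 * (R + ρ)) ^ (n - 2) := by
    rw [← ENNReal.ofReal_pow (by linarith), ← ENNReal.ofReal_pow (by linarith),
      ← ENNReal.ofReal_mul (by linarith), ← ENNReal.ofReal_mul (by linarith)] at hchain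
    have h0 : (0:ℝ) ≤ 2 * (β + 1) * (2 * (R + ρ)) ^ (n - 2) :=
      mul_nonneg (by linarith) (pow_nonneg (by linarith) _)
    exact (ENNReal.ofReal_le_ofReal_iff h0).mp hchain
  -- contradiction
  have hq : (β + 1) * (R + ρ) ^ (n - 2) < (α + 1) * (R - ρ) ^ (n - 2) := by
    have := hRmain
    rw [div_mul_eq_mul_div, div_lt_iff₀ (by linarith : (0:ℝ) < α + 1)] at this
    linarith [this]
  have hP : (0:ℝ) < 2 ^ (n - 2) := pow_pos two_pos _
  rw [mul_pow, mul_pow] at hreal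
  nlinarith [hreal, hq, hP]
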